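/- For all natural numbers n, k, l with 1 ≤ n and l ≤ k ≤ n - 1, the following identity holds in ℚ(q): F(n+1, k, l)/F(n, k, l) = q^k * (1 - q^{-n-k-1})*(1 - q^{-n}) / ((1 - q^{-n-1})*(1 - q^{-n+k})). -/

import Mathlib

noncomputable section
open Finset

/-- The rational function field `ℚ(q)`. -/
abbrev Qq : Type := RatFunc ℚ

/-- The variable `q` of `ℚ(q)`. -/
def q : Qq := RatFunc.X

/-- `(q)_r = ∏_{j=1}^{r} (1 - q^j)`. -/
def qPoch (r : ℕ) : Qq := ∏ j ∈ Finset.Icc 1 r, (1 - q ^ j)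

/-- `(q⁻¹)_r = ∏_{j=1}^{r} (1 - q^{-j})`. -/
def qInvPoch (r : ℕ) : Qq := ∏ j ∈ Finset.Icc 1 r, (1 - q ^ (-(j : ℤ)))

/-- The summand `F(n, k, l)` in the rearranged Masbaum formula for the colored
Jones polynomial of the twist knot `K_p`. -/
def F (p : ℤ) (n k l : ℕ) : Qq :=
  (-1) ^ (k + 1) * q ^ (k * (k + 3) / 2) * q ^ (n * k) *
    ((qInvPoch (n + k) * qInvPoch (n - 1)) / (qInvPoch n * qInvPoch (n - k - 1))) *
    ((-1) ^ l * q ^ ((l : ℤ) * ((l : ℤ) + 1) * p + (l : ℤ) * ((l : ℤ) - 1) / 2) *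
      (q ^ (2 * l + 1) - 1) * qPoch k / (qPoch (k + l + 1) * qPoch (k - l)))

lemma q_ne_zero : (q : Qq) ≠ 0 := RatFunc.X_ne_zero

lemma q_pow_ne_one (j : ℕ) (hj : 1 ≤ j) : q ^ j ≠ 1 := by
  intro h
  have h2 : (Polynomial.X : Polynomial ℚ) ^ j = 1 := by
    apply RatFunc.algebraMap_injective ℚ
    simpa [q, map_pow] using h
  have := congrArg Polynomial.natDegree h2
  simp [Polynomial.natDegree_X_pow] at this
  omega

lemma q_zpow_ne_one (j : ℤ) (hj : j ≠ 0) : q ^ j ≠ 1 := by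
  intro h
  rcases lt_or_gt_of_ne hj with hneg | hpos
  · refine q_pow_ne_one (-j).toNat (by omega) ?_
    rw [← zpow_natCast, Int.toNat_of_nonneg (by omega), zpow_neg, h, inv_one]
  · refine q_pow_ne_one j.toNat (by omega) ?_
    rw [← zpow_natCast, Int.toNat_of_nonneg (by omega), h]

lemma one_sub_q_zpow_ne (j : ℤ) (hj : j ≠ 0) : (1 : Qq) - q ^ j ≠ 0 := by
  rw [sub_ne_zero]
  exact fun h => q_zpow_ne_one j hj h.symm

lemma one_sub_q_pow_ne (j : ℕ) (hj : 1 ≤ j) : (1 : Qq) - q ^ j ≠ 0 := by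
  rw [sub_ne_zero]
  exact fun h => q_pow_ne_one j hj h.symm

lemma qPoch_ne_zero (r : ℕ) : qPoch r ≠ 0 := by
  rw [qPoch, Finset.prod_ne_zero_iff]
  intro j hj
  exact one_sub_q_pow_ne j (Finset.mem_Icc.mp hj).1

lemma qInvPoch_ne_zero (r : ℕ) : qInvPoch r ≠ 0 := by
  rw [qInvPoch, Finset.prod_ne_zero_iff]
  intro j hj
  have := (Finset.mem_Icc.mp hj).1
  exact one_sub_q_zpow_ne _ (by omega)

lemma one_sub_q_inv (j : ℕ) : (1 : Qq) - q ^ (-(j : ℤ)) = (q ^ j - 1) * (q ^ j)⁻¹ := by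
  have h : (q : Qq) ^ j ≠ 0 := pow_ne_zero _ q_ne_zero
  rw [zpow_neg, zpow_natCast]
  field_simp

lemma qInvPoch_succ (r : ℕ) : qInvPoch (r + 1) = qInvPoch r * ((q ^ (r + 1) - 1) * (q ^ (r + 1))⁻¹) := by
  rw [qInvPoch, qInvPoch, Finset.prod_Icc_succ_top (by omega : 1 ≤ r + 1),
    one_sub_q_inv (r + 1)]

lemma F_ne_zero (p : ℤ) (n k l : ℕ) : F p n k l ≠ 0 := by
  unfold F
  refine mul_ne_zero (mul_ne_zero (mul_ne_zero (mul_ne_zero ?_ ?_) ?_) ?_) ?_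
  · exact pow_ne_zero _ (neg_ne_zero.mpr one_ne_zero)
  · exact pow_ne_zero _ q_ne_zero
  · exact pow_ne_zero _ q_ne_zero
  · exact div_ne_zero (mul_ne_zero (qInvPoch_ne_zero _) (qInvPoch_ne_zero _))
      (mul_ne_zero (qInvPoch_ne_zero _) (qInvPoch_ne_zero _))
  · refine div_ne_zero (mul_ne_zero (mul_ne_zero (mul_ne_zero ?_ ?_) ?_) ?_) ?_
    · exact pow_ne_zero _ (neg_ne_zero.mpr one_ne_zero)
    · exact zpow_ne_zero _ q_ne_zero
    · rw [sub_ne_zero]; exact q_pow_ne_one _ (by omega)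
    · exact qPoch_ne_zero _
    · exact mul_ne_zero (qPoch_ne_zero _) (qPoch_ne_zero _)

set_option maxHeartbeats 1000000 in
/-- Equation (3) of the paper, defining `f₀`:
`F(n+1,k,l)/F(n,k,l) = q^k (1 - q^{-n-k-1})(1 - q^{-n}) / ((1 - q^{-n-1})(1 - q^{-n+k}))`. -/
theorem stmt_16 (p : ℤ) (n k l : ℕ) (hn : 1 ≤ n) (hlk : l ≤ k) (hkn : k ≤ n - 1) :
    F p (n + 1) k l / F p n k l =
      q ^ k * ((1 - q ^ (-(n : ℤ) - (k : ℤ) - 1)) * (1 - q ^ (-(n : ℤ)))) /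
        ((1 - q ^ (-(n : ℤ) - 1)) * (1 - q ^ (-(n : ℤ) + (k : ℤ)))) := by
  obtain ⟨m, rfl⟩ : ∃ m, n = m + 1 := ⟨n - 1, by omega⟩
  have hkm : k ≤ m := by omega
  rw [div_eq_div_iff (F_ne_zero p (m + 1) k l)
    (mul_ne_zero (one_sub_q_zpow_ne _ (by push_cast; omega))
      (one_sub_q_zpow_ne _ (by push_cast; omega)))]
  have e1 : -((m + 1 : ℕ) : ℤ) - (k : ℤ) - 1 = -((m + k + 2 : ℕ) : ℤ) := by push_cast; ring
  have e2 : -((m + 1 : ℕ) : ℤ) = -((m + 1 : ℕ) : ℤ) := rfl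
  have e3 : -((m + 1 : ℕ) : ℤ) - 1 = -((m + 2 : ℕ) : ℤ) := by push_cast; ring
  have e4 : -((m + 1 : ℕ) : ℤ) + (k : ℤ) = -((m - k + 1 : ℕ) : ℤ) := by
    push_cast [Nat.cast_sub hkm]; ring
  rw [e1, e3, e4, one_sub_q_inv, one_sub_q_inv, one_sub_q_inv, one_sub_q_inv]
  simp only [F]
  have a1 : m + 1 + 1 + k = (m + 1 + k) + 1 := by omega
  have a2 : m + 1 + 1 - 1 = m + 1 := by omega
  have a3 : m + 1 - 1 = m := by omega
  have a4 : m + 1 + 1 - k - 1 = (m - k) + 1 := by omega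
  have a5 : m + 1 - k - 1 = m - k := by omega
  have a6 : m + 1 + k = m + k + 1 := by omega
  have a7 : m + 1 = m + 1 := rfl
  rw [a1, a2, a3, a4, a5, qInvPoch_succ (m + 1 + k), qInvPoch_succ (m + 1), qInvPoch_succ m,
    qInvPoch_succ (m - k)]
  have hc : ((m - k : ℕ) : ℤ) = (m : ℤ) - (k : ℤ) := by push_cast [Nat.cast_sub hkm]; ring
  have hnz : ∀ j : ℕ, (q : Qq) ^ j ≠ 0 := fun j => pow_ne_zero _ q_ne_zero
  have hs : ∀ j : ℕ, 1 ≤ j → (q ^ j - 1 : Qq) ≠ 0 :=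
    fun j hj => sub_ne_zero.mpr (q_pow_ne_one j hj)
  field_simp [qPoch_ne_zero, qInvPoch_ne_zero, hnz, q_ne_zero]
  have tac : ∀ x y : Qq, x ≠ 0 → y ≠ 0 → x * y ≠ 0 := fun _ _ => mul_ne_zero
  rw [div_eq_div_iff ?hb ?hd]
  case hb =>
    repeat' first
      | exact hnz _
      | exact qInvPoch_ne_zero _
      | exact qPoch_ne_zero _
      | exact zpow_ne_zero _ q_ne_zero
      | exact pow_ne_zero _ (neg_ne_zero.mpr one_ne_zero)
      | exact q_ne_zero
      | exact hs _ (by omega)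
      | apply mul_ne_zero
  case hd =>
    repeat' first
      | exact hnz _
      | exact qInvPoch_ne_zero _
      | exact qPoch_ne_zero _
      | exact zpow_ne_zero _ q_ne_zero
      | exact pow_ne_zero _ (neg_ne_zero.mpr one_ne_zero)
      | exact q_ne_zero
      | exact hs _ (by omega)
      | apply mul_ne_zero
  ring
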